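/- Let Y be a nonempty complete metric space and s : Y → ℝ a function with s(y) ≥ 0 for all y ∈ Y. Assume: (i) for every δ > 0 the set {y ∈ Y : s(y) < δ} is open in Y; and (ii) for every y ∈ Y there exist ε > 0, a continuous map γ : (-ε, ε) → Y with γ(0) = y, real numbers a ≤ b, and an assignment to each t ∈ (-ε, ε) of a Lebesgue-measurable set N(t) ⊆ [a, b] such that the sets N(t) are pairwise disjoint and such that s(γ(t)) = 0 whenever vol(N(t)) = 0. Then {y ∈ Y : s(y) = 0} is comeagre in Y, i.e. {y ∈ Y : s(y) ≠ 0} is a countable union of nowhere dense sets. -/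

import Mathlib

open MeasureTheory

/-- Let `Y` be a nonemtpy complete metric space and `s : Y → ℝ` nonnegative. Assume (i) every
sublevel set `{s < δ}` (for `δ > 0`) is open, and (ii) through every point of `Y` there is a
continuous path `γ : (-ε, ε) → Y` together with pairwise disjoint Lebesgue-measurable sets
`N t ⊆ [a, b]` such that `s (γ t) = 0` whenever `vol (N t) = 0`. Then `{s = 0}` is comeagre,
i.e. `{s ≠ 0}` is a countable union of nowhere dense sets. -/
theorem zero_set_comeagre_of_open_sublevels_of_local_paths
    {Y : Type*} [MetricSpace Y] [CompleteSpace Y] [Nonempty Y]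
    (s : Y → ℝ) (hs : ∀ y, 0 ≤ s y)
    (hopen : ∀ δ > 0, IsOpen {y | s y < δ})
    (hloc : ∀ y : Y, ∃ (ε : ℝ) (γ : ℝ → Y) (a b : ℝ) (N : ℝ → Set ℝ),
      0 < ε ∧ ContinuousOn γ (Set.Ioo (-ε) ε) ∧ γ 0 = y ∧ a ≤ b ∧
      (∀ t ∈ Set.Ioo (-ε) ε, MeasurableSet (N t)) ∧
      (∀ t ∈ Set.Ioo (-ε) ε, N t ⊆ Set.Icc a b) ∧
      (Set.Ioo (-ε) ε).Pairwise (Function.onFun Disjoint N) ∧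
      (∀ t ∈ Set.Ioo (-ε) ε, volume (N t) = 0 → s (γ t) = 0)) :
    IsMeagre {y | s y ≠ 0} := by
  -- Step 1: the zero set is dense.
  have hdense : Dense {y | s y = 0} := by
    rw [Metric.dense_iff]
    intro y r hr
    obtain ⟨ε, γ, a, b, N, hε, hγ, hγ0, hab, hNm, hNsub, hNdisj, hN0⟩ := hloc y
    have h0mem : (0 : ℝ) ∈ Set.Ioo (-ε) ε := ⟨by linarith, hε⟩
    -- continuity of γ at 0 within the interval
    have hc := hγ 0 h0mem
    rw [Metric.continuousWithinAt_iff] at hc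
    obtain ⟨δ, hδ, hδc⟩ := hc r hr
    -- countably many t with positive measure
    set I := Set.Ioo (-ε) ε
    have hcnt : Set.Countable {i : I | 0 < volume (N i)} := by
      apply MeasureTheory.Measure.countable_meas_pos_of_disjoint_of_meas_iUnion_ne_top
        (As := fun i : I => N i)
      · exact fun i => hNm i i.2
      · intro i j hij
        exact hNdisj i.2 j.2 (fun h => hij (Subtype.ext h))
      · refine ne_top_of_le_ne_top ?_ (measure_mono (Set.iUnion_subset fun i => hNsub i i.2))
        simp [Real.volume_Icc]
    have hcnt' : Set.Countable {t ∈ I | 0 < volume (N t)} := by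
      have : {t ∈ I | 0 < volume (N t)} ⊆ Subtype.val '' {i : I | 0 < volume (N i)} := by
        rintro t ⟨ht, hpos⟩
        exact ⟨⟨t, ht⟩, hpos, rfl⟩
      exact (hcnt.image _).mono this
    -- find t near 0 with volume (N t) = 0
    set δ' := min δ ε with hδ'def
    have hδ'pos : 0 < δ' := lt_min hδ hε
    have hsub : Set.Ioo (-δ') δ' ⊆ I :=
      Set.Ioo_subset_Ioo (by linarith [min_le_right δ ε]) (min_le_right δ ε)
    have : ¬ Set.Ioo (-δ') δ' ⊆ {t ∈ I | 0 < volume (N t)} := by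
      intro hcontra
      have := measure_mono_null hcontra (hcnt'.measure_zero volume)
      rw [Real.volume_Ioo] at this
      have : (0:ℝ) < δ' - (-δ') := by linarith
      simp_all [ENNReal.ofReal_eq_zero]
      rcases this with h | h <;> linarith
    obtain ⟨t, ht, hbad⟩ := Set.not_subset.mp this
    have htI : t ∈ I := hsub ht
    have hvol : volume (N t) = 0 := by
      by_contra h
      exact hbad ⟨htI, pos_iff_ne_zero.mpr h⟩
    refine ⟨γ t, ?_, hN0 t htI hvol⟩
    have hdist : dist t 0 < δ := by
      rw [Real.dist_eq, sub_zero]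
      rcases ht with ⟨h1, h2⟩
      rw [abs_lt]
      constructor <;> [linarith [min_le_left δ ε]; linarith [min_le_left δ ε]]
    have := hδc htI hdist
    rw [hγ0] at this
    exact Metric.mem_ball.mpr this
  -- Step 2: {s ≠ 0} is a countable union of closed nowhere dense sets.
  have hsub : {y | s y ≠ 0} ⊆ ⋃ n : ℕ, {y | s y < 1 / (n + 1)}ᶜ := by
    intro y hy
    have hpos : 0 < s y := lt_of_le_of_ne (hs y) (Ne.symm hy)
    obtain ⟨n, hn⟩ := exists_nat_one_div_lt hpos
    exact Set.mem_iUnion.mpr ⟨n, fun h => absurd h (not_lt.mpr hn.le)⟩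
  refine IsMeagre.mono hsub (isMeagre_iUnion fun n => ?_)
  have hδpos : (0:ℝ) < 1 / (n + 1) := by positivity
  have hclosed : IsClosed ({y | s y < 1 / (n + 1)}ᶜ) := (hopen _ hδpos).isClosed_compl
  show {y | s y < 1 / (n + 1)}ᶜᶜ ∈ residual Y
  rw [compl_compl]
  refine residual_of_dense_open (hopen _ hδpos) (hdense.mono ?_)
  intro z hz
  simp only [Set.mem_setOf_eq] at hz ⊢
  rw [hz]; exact hδpos
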